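/- Let R be a Noetherian local ring and M a finite R-module with depth_R(M) ≥ 2. Then for any finite R-module M', the R-module Hom_R(M', M) also has depth ≥ 2. -/

import Mathlib

open IsLocalRing

open Pointwise in
private lemma mem_smul_top_iff {R M : Type*} [CommRing R] [AddCommGroup M] [Module R M]
    (x : R) (m : M) : m ∈ x • (⊤ : Submodule R M) ↔ ∃ n, x • n = m := by
  rw [← SetLike.mem_coe, Submodule.coe_pointwise_smul, Set.mem_smul_set]
  simp

/-- If `x` is regular on `M` and `f : M' →ₗ[R] M` has image in `xM`, then `f = x • g`. -/
private noncomputable def divBy {R M M' : Type*} [CommRing R] [AddCommGroup M] [Module R M]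
    [AddCommGroup M'] [Module R M'] (x : R) (hx : IsSMulRegular M x)
    (f : M' →ₗ[R] M) (hf : ∀ m', ∃ n, x • n = f m') : M' →ₗ[R] M where
  toFun m' := (hf m').choose
  map_add' a b := by
    apply hx
    beta_reduce
    rw [smul_add, (hf a).choose_spec, (hf b).choose_spec, (hf (a + b)).choose_spec, map_add]
  map_smul' r a := by
    apply hx
    beta_reduce
    rw [RingHom.id_apply, smul_comm, (hf a).choose_spec, (hf (r • a)).choose_spec, map_smul]

private lemma divBy_spec {R M M' : Type*} [CommRing R] [AddCommGroup M] [Module R M]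
    [AddCommGroup M'] [Module R M'] (x : R) (hx : IsSMulRegular M x)
    (f : M' →ₗ[R] M) (hf : ∀ m', ∃ n, x • n = f m') : x • divBy x hx f hf = f := by
  ext m'
  exact (hf m').choose_spec

/-- `depthGE R M n` : the `m`-depth of the `R`-module `M` is at least `n`, expressed as the
existence of a weakly regular sequence of length `n` with entries in the maximal ideal. -/
def depthGE (R : Type*) [CommRing R] [IsLocalRing R]
    (M : Type*) [AddCommGroup M] [Module R M] (n : ℕ) : Prop :=
  ∃ rs : List R, rs.length = n ∧ (∀ r ∈ rs, r ∈ maximalIdeal R) ∧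
    RingTheory.Sequence.IsWeaklyRegular M rs

open Pointwise in
theorem hom_depth_ge_two (R : Type*) [CommRing R] [IsLocalRing R] [IsNoetherianRing R]
    (M M' : Type*) [AddCommGroup M] [Module R M] [Module.Finite R M]
    [AddCommGroup M'] [Module R M'] [Module.Finite R M']
    (hM : depthGE R M 2) :
    depthGE R (M' →ₗ[R] M) 2 := by
  obtain ⟨rs, hlen, hmem, hreg⟩ := hM
  match rs, hlen with
  | [x, y], _ =>
  rw [RingTheory.Sequence.isWeaklyRegular_cons_iff,
      RingTheory.Sequence.isWeaklyRegular_singleton_iff] at hreg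
  obtain ⟨hx, hy⟩ := hreg
  -- x is regular on Hom(M', M)
  have hxH : IsSMulRegular (M' →ₗ[R] M) x := by
    intro f g h
    ext m'
    exact hx (congrArg (fun F : M' →ₗ[R] M => F m') h)
  refine ⟨[x, y], rfl, hmem, ?_⟩
  rw [RingTheory.Sequence.isWeaklyRegular_cons_iff,
      RingTheory.Sequence.isWeaklyRegular_singleton_iff]
  refine ⟨hxH, ?_⟩
  -- y is regular on Hom(M', M) / x Hom(M', M)
  rw [isSMulRegular_quotient_iff_mem_of_smul_mem]
  intro f hf
  rw [mem_smul_top_iff] at hf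
  obtain ⟨g, hg⟩ := hf
  -- For each m', f m' ∈ x M, since y • (f m') = x • (g m') and y is regular on M/xM
  have key : ∀ m', ∃ n, x • n = f m' := by
    intro m'
    have h1 : y • f m' ∈ x • (⊤ : Submodule R M) := by
      rw [mem_smul_top_iff]
      exact ⟨g m', congrArg (fun F : M' →ₗ[R] M => F m') hg⟩
    have h2 : f m' ∈ x • (⊤ : Submodule R M) :=
      mem_of_isSMulRegular_quotient_of_smul_mem hy h1
    rwa [mem_smul_top_iff] at h2
  rw [mem_smul_top_iff]
  exact ⟨divBy x hx f key, divBy_spec x hx f key⟩
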